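/- Let 0 < a ≤ b and let u : ℝ → ℝ be continuously differentiable on [0,b]. Define φ(t) = (1 − t/a)² for t ∈ [0,a] and φ(t) = 0 for t > a, so that φ is C¹ on [0,b] with derivative φ′(t) = −(2/a)(1 − t/a) on [0,a] and φ′(t) = 0 for t > a, and let ψ(t) = (2/a²)·1_{[0,a]}(t). Then (∫₀^b ((1 − φ(t))u′(t) − 2φ′(t)u(t) − ψ(t)∫₀^t u(s) ds)² dt)^{1/2} ≤ (∫₀^b u′(t)² dt)^{1/2} + (4 + √2)·a^{−1}·(∫₀^b u(t)² dt)^{1/2}. -/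

import Mathlib

open Real MeasureTheory
lemma my_integrable_mul {α : Type*} [MeasurableSpace α] {μ : Measure α} {f g : α → ℝ}
    (hf : MemLp f 2 μ) (hg : MemLp g 2 μ) :
    Integrable (fun x => f x * g x) μ := by
  have hI : Integrable (fun x => (f x ^ 2 + g x ^ 2) / 2) μ := by
    exact (hf.integrable_sq.add hg.integrable_sq).div_const 2
  refine Integrable.mono' hI (hf.1.mul hg.1) (Filter.Eventually.of_forall fun x => ?_)
  rw [Real.norm_eq_abs, abs_mul]
  nlinarith [sq_nonneg (|f x| - |g x|), sq_abs (f x), sq_abs (g x)]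

lemma my_holder {α : Type*} [MeasurableSpace α] {μ : Measure α} {f g : α → ℝ}
    (hf : MemLp f 2 μ) (hg : MemLp g 2 μ) :
    ∫ x, f x * g x ∂μ ≤ Real.sqrt (∫ x, f x ^ 2 ∂μ) * Real.sqrt (∫ x, g x ^ 2 ∂μ) := by
  have hf2 : MemLp f (ENNReal.ofReal 2) μ := by rwa [ENNReal.ofReal_ofNat]
  have hg2 : MemLp g (ENNReal.ofReal 2) μ := by rwa [ENNReal.ofReal_ofNat]
  have h := integral_mul_norm_le_Lp_mul_Lq Real.HolderConjugate.two_two hf2 hg2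
  have hid : ∀ (h : α → ℝ), (∫ x, ‖h x‖ ^ (2:ℝ) ∂μ) ^ (1/(2:ℝ)) = Real.sqrt (∫ x, h x ^ 2 ∂μ) := by
    intro h
    rw [← Real.sqrt_eq_rpow]
    congr 1
    refine integral_congr_ae (Filter.Eventually.of_forall fun x => ?_)
    simp only [Real.norm_eq_abs]
    rw [show (2:ℝ) = ((2:ℕ):ℝ) by norm_num, Real.rpow_natCast, sq_abs]
  rw [hid f, hid g] at h
  refine le_trans ?_ h
  refine integral_mono (my_integrable_mul hf hg) ?_ (fun x => ?_)
  · have := (my_integrable_mul hf hg).abs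
    refine this.congr (Filter.Eventually.of_forall fun x => ?_)
    simp [Real.norm_eq_abs, abs_mul]
  · simp only [Real.norm_eq_abs, ← abs_mul]
    exact le_abs_self _

lemma my_triangle {α : Type*} [MeasurableSpace α] {μ : Measure α} {f g : α → ℝ}
    (hf : MemLp f 2 μ) (hg : MemLp g 2 μ) :
    Real.sqrt (∫ x, (f x + g x) ^ 2 ∂μ)
      ≤ Real.sqrt (∫ x, f x ^ 2 ∂μ) + Real.sqrt (∫ x, g x ^ 2 ∂μ) := by
  set A := ∫ x, f x ^ 2 ∂μ with hA
  set B := ∫ x, g x ^ 2 ∂μ with hB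
  have hA0 : 0 ≤ A := integral_nonneg fun x => sq_nonneg _
  have hB0 : 0 ≤ B := integral_nonneg fun x => sq_nonneg _
  have hImul : Integrable (fun x => 2 * (f x * g x) + g x ^ 2) μ := by
    exact ((my_integrable_mul hf hg).const_mul 2).add hg.integrable_sq
  have hexp : ∫ x, (f x + g x) ^ 2 ∂μ
      = A + (2 * ∫ x, f x * g x ∂μ + B) := by
    have h1 : ∫ x, (f x + g x)^2 ∂μ
        = ∫ x, (f x ^2 + (2 * (f x * g x) + g x ^2)) ∂μ := by
      refine integral_congr_ae (Filter.Eventually.of_forall fun x => by ring)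
    rw [h1, integral_add hf.integrable_sq hImul,
      integral_add ((my_integrable_mul hf hg).const_mul 2) hg.integrable_sq,
      integral_const_mul]
  have hCS := my_holder hf hg
  have : ∫ x, (f x + g x) ^ 2 ∂μ ≤ (Real.sqrt A + Real.sqrt B)^2 := by
    rw [hexp, add_sq, Real.sq_sqrt hA0, Real.sq_sqrt hB0]
    nlinarith
  calc Real.sqrt (∫ x, (f x + g x) ^ 2 ∂μ) ≤ Real.sqrt ((Real.sqrt A + Real.sqrt B)^2) :=
        Real.sqrt_le_sqrt this
    _ = Real.sqrt A + Real.sqrt B := Real.sqrt_sq (by positivity)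

lemma my_abs_integral_le {α : Type*} [MeasurableSpace α] {μ : Measure α} [IsFiniteMeasure μ]
    {f : α → ℝ} (hf : MemLp f 2 μ) :
    |∫ x, f x ∂μ| ≤ Real.sqrt (∫ x, f x ^ 2 ∂μ) * Real.sqrt ((μ Set.univ).toReal) := by
  have h1 : MemLp (fun _ : α => (1:ℝ)) 2 μ := memLp_const 1
  have h := my_holder hf.norm h1
  simp only [mul_one, Real.norm_eq_abs, one_pow, sq_abs, integral_const, smul_eq_mul] at h
  calc |∫ x, f x ∂μ| ≤ ∫ x, |f x| ∂μ := (by simpa [Real.norm_eq_abs] using norm_integral_le_integral_norm (μ := μ) f)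
    _ ≤ _ := by simpa [Measure.real] using h

/-- Triangle-inequality `L²` estimate for `ẇ = (1 − φ)u′ − 2φ′u − ψ ∫₀^· u`, where
`φ(t) = (1 − t/a)² 1_{[0,a]}(t)`, `φ′(t) = −(2/a)(1 − t/a) 1_{[0,a]}(t)` and
`ψ = (2/a²) 1_{[0,a]}`:
`‖ẇ‖_{L²(0,b)} ≤ ‖u′‖_{L²(0,b)} + (4 + √2) a⁻¹ ‖u‖_{L²(0,b)}`. -/
theorem wdot_L2_triangle_bound (a b : ℝ) (ha : 0 < a) (hab : a ≤ b)
    (u u' : ℝ → ℝ)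
    (hu : ∀ t ∈ Set.Icc (0:ℝ) b, HasDerivWithinAt u (u' t) (Set.Icc 0 b) t)
    (hu' : ContinuousOn u' (Set.Icc 0 b))
    (φ φ' ψ : ℝ → ℝ)
    (hφ : ∀ t, φ t = if t ≤ a then (1 - t/a)^2 else 0)
    (hφ' : ∀ t, φ' t = if t ≤ a then -(2/a) * (1 - t/a) else 0)
    (hψ : ∀ t, ψ t = Set.indicator (Set.Icc 0 a) (fun _ => 2/a^2) t) :
    Real.sqrt (∫ t in (0:ℝ)..b,
        ((1 - φ t) * u' t - 2 * φ' t * u t - ψ t * ∫ s in (0:ℝ)..t, u s)^2)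
      ≤ Real.sqrt (∫ t in (0:ℝ)..b, (u' t)^2)
        + (4 + Real.sqrt 2) * a⁻¹ * Real.sqrt (∫ t in (0:ℝ)..b, (u t)^2) := by
  
  have hb : (0:ℝ) ≤ b := ha.le.trans hab
  set μ : Measure ℝ := volume.restrict (Set.Ioc (0:ℝ) b) with hμdef
  haveI hfin : IsFiniteMeasure μ := ⟨by
    rw [Measure.restrict_apply_univ]; exact measure_Ioc_lt_top⟩
  -- continuity and bounds
  have hcu : ContinuousOn u (Set.Icc 0 b) := fun t ht => (hu t ht).continuousWithinAt
  obtain ⟨Cu, hCu⟩ := isCompact_Icc.exists_bound_of_continuousOn hcu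
  obtain ⟨Cv, hCv⟩ := isCompact_Icc.exists_bound_of_continuousOn hu'
  have hCu0 : 0 ≤ Cu := le_trans (norm_nonneg _) (hCu 0 ⟨le_rfl, hb⟩)
  set V : ℝ → ℝ := fun t => ∫ s in (0:ℝ)..t, u s with hVdef
  have huI : IntegrableOn u (Set.Icc 0 b) volume := hcu.integrableOn_compact isCompact_Icc
  have hVcont : ContinuousOn V (Set.Icc 0 b) := by
    have := intervalIntegral.continuousOn_primitive_interval
      (a := (0:ℝ)) (b := b) (μ := volume) (f := u) (by rwa [Set.uIcc_of_le hb])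
    rwa [Set.uIcc_of_le hb] at this
  -- measurability of the cutoffs
  have measφ : Measurable φ := by
    have : φ = fun t => if t ≤ a then (1 - t/a)^2 else 0 := funext hφ
    rw [this]
    exact Measurable.ite (measurableSet_le measurable_id measurable_const) (by fun_prop)
      measurable_const
  have measφ' : Measurable φ' := by
    have : φ' = fun t => if t ≤ a then -(2/a) * (1 - t/a) else 0 := funext hφ'
    rw [this]
    exact Measurable.ite (measurableSet_le measurable_id measurable_const) (by fun_prop)
      measurable_const
  have measψ : Measurable ψ := by
    have : ψ = Set.indicator (Set.Icc 0 a) (fun _ => 2/a^2) := funext hψ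
    rw [this]
    exact Measurable.indicator measurable_const measurableSet_Icc
  -- pointwise bounds on [0,b]
  have hφ01 : ∀ t ∈ Set.Ioc (0:ℝ) b, 0 ≤ φ t ∧ φ t ≤ 1 := by
    intro t ht
    rw [hφ t]
    by_cases hta : t ≤ a
    · simp only [hta, if_true]
      have h1 : 0 < t / a := div_pos ht.1 ha
      have h2 : t / a ≤ 1 := (div_le_one ha).mpr hta
      constructor
      · positivity
      · nlinarith
    · simp [hta]
  have hφ'b : ∀ t ∈ Set.Ioc (0:ℝ) b, |φ' t| ≤ 2 / a := by
    intro t ht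
    rw [hφ' t]
    by_cases hta : t ≤ a
    · simp only [hta, if_true]
      have h1 : 0 < t / a := div_pos ht.1 ha
      have h2 : t / a ≤ 1 := (div_le_one ha).mpr hta
      rw [abs_mul, abs_neg, abs_of_pos (by positivity : (0:ℝ) < 2/a),
        abs_of_nonneg (by linarith : (0:ℝ) ≤ 1 - t/a)]
      nlinarith [div_pos (by norm_num : (0:ℝ) < 2) ha]
    · simp [hta]
      positivity
  have hVb : ∀ t ∈ Set.Ioc (0:ℝ) b, |V t| ≤ Cu * b := by
    intro t ht
    have : ‖V t‖ ≤ Cu * |t - 0| := by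
      refine intervalIntegral.norm_integral_le_of_norm_le_const fun x hx => ?_
      rw [Set.uIoc_of_le ht.1.le] at hx
      exact hCu x ⟨hx.1.le, hx.2.trans ht.2⟩
    rw [Real.norm_eq_abs] at this
    refine this.trans ?_
    rw [sub_zero, abs_of_pos ht.1]
    exact mul_le_mul_of_nonneg_left ht.2 hCu0
  -- the three pieces
  set f1 : ℝ → ℝ := fun t => (1 - φ t) * u' t with hf1def
  set f2 : ℝ → ℝ := fun t => -(2 * φ' t * u t) with hf2def
  set f3 : ℝ → ℝ := fun t => -(ψ t * V t) with hf3def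
  -- MemLp facts
  have hmu : MemLp u 2 μ :=
    MemLp.of_bound ((hcu.mono Set.Ioc_subset_Icc_self).aestronglyMeasurable measurableSet_Ioc)
      Cu (ae_restrict_of_forall_mem measurableSet_Ioc fun t ht =>
        hCu t (Set.Ioc_subset_Icc_self ht))
  have hmu' : MemLp u' 2 μ :=
    MemLp.of_bound ((hu'.mono Set.Ioc_subset_Icc_self).aestronglyMeasurable measurableSet_Ioc)
      Cv (ae_restrict_of_forall_mem measurableSet_Ioc fun t ht =>
        hCv t (Set.Ioc_subset_Icc_self ht))
  have hmf1 : MemLp f1 2 μ := by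
    refine MemLp.of_bound (((measurable_const.sub measφ).aestronglyMeasurable).mul hmu'.1) Cv
      (ae_restrict_of_forall_mem measurableSet_Ioc fun t ht => ?_)
    have h1 := hφ01 t ht
    have h2 := hCv t (Set.Ioc_subset_Icc_self ht)
    rw [Real.norm_eq_abs] at h2 ⊢
    simp only [hf1def, abs_mul]
    calc |1 - φ t| * |u' t| ≤ 1 * |u' t| := by
          refine mul_le_mul_of_nonneg_right ?_ (abs_nonneg _)
          rw [abs_le]; constructor <;> linarith [h1.1, h1.2]
      _ ≤ Cv := by rw [one_mul]; exact h2
  have hmf2 : MemLp f2 2 μ := by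
    refine MemLp.of_bound (((measurable_const.mul measφ').aestronglyMeasurable.mul hmu.1).neg)
      (2 * (2/a) * Cu) (ae_restrict_of_forall_mem measurableSet_Ioc fun t ht => ?_)
    have h1 := hφ'b t ht
    have h2 := hCu t (Set.Ioc_subset_Icc_self ht)
    rw [Real.norm_eq_abs] at h2 ⊢
    simp only [hf2def, abs_neg, abs_mul, abs_two]
    have h3 : (0:ℝ) ≤ 2/a := by positivity
    exact mul_le_mul (mul_le_mul_of_nonneg_left h1 (by norm_num)) h2 (abs_nonneg _)
      (by positivity)
  have hmf3 : MemLp f3 2 μ := by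
    refine MemLp.of_bound
      ((measψ.aestronglyMeasurable.mul
        ((hVcont.mono Set.Ioc_subset_Icc_self).aestronglyMeasurable measurableSet_Ioc)).neg)
      (2/a^2 * (Cu * b)) (ae_restrict_of_forall_mem measurableSet_Ioc fun t ht => ?_)
    have h1 := hVb t ht
    have hψb : |ψ t| ≤ 2/a^2 := by
      rw [hψ t]
      by_cases h : t ∈ Set.Icc 0 a
      · rw [Set.indicator_of_mem h]; rw [abs_of_nonneg (by positivity)]
      · rw [Set.indicator_of_notMem h]; simp; positivity
    rw [Real.norm_eq_abs]
    simp only [hf3def, abs_neg, abs_mul]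
    exact mul_le_mul hψb h1 (abs_nonneg _) (by positivity)
  -- rewrite interval integrals as integrals over μ
  have hiv : ∀ h : ℝ → ℝ, (∫ t in (0:ℝ)..b, h t) = ∫ t, h t ∂μ := fun h =>
    intervalIntegral.integral_of_le hb
  rw [hiv, hiv, hiv]
  -- the integrand is (f1 + (f2 + f3))^2
  have hintegrand : ∀ t, ((1 - φ t) * u' t - 2 * φ' t * u t - ψ t * ∫ s in (0:ℝ)..t, u s)^2
      = (f1 t + (f2 t + f3 t))^2 := by
    intro t
    simp only [hf1def, hf2def, hf3def, hVdef]
    ring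
  simp_rw [hintegrand]
  -- triangle inequalities
  have hmf23 : MemLp (fun t => f2 t + f3 t) 2 μ := hmf2.add hmf3
  have step1 := my_triangle (μ := μ) hmf1 hmf23
  have step2 := my_triangle (μ := μ) hmf2 hmf3
  set U : ℝ := ∫ x, u x ^ 2 ∂μ with hUdef
  have hU0 : 0 ≤ U := integral_nonneg fun x => sq_nonneg _
  -- bound 1
  have h1 : Real.sqrt (∫ x, f1 x ^ 2 ∂μ) ≤ Real.sqrt (∫ t, u' t ^ 2 ∂μ) := by
    refine Real.sqrt_le_sqrt ?_
    refine integral_mono_of_nonneg (Filter.Eventually.of_forall fun x => sq_nonneg _)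
      hmu'.integrable_sq (ae_restrict_of_forall_mem measurableSet_Ioc fun t ht => ?_)
    have hh := hφ01 t ht
    have hsq : (1 - φ t)^2 ≤ 1 := by nlinarith [hh.1, hh.2]
    simp only [hf1def]
    calc ((1 - φ t) * u' t)^2 = (1 - φ t)^2 * u' t ^2 := by ring
      _ ≤ 1 * u' t ^ 2 := mul_le_mul_of_nonneg_right hsq (sq_nonneg _)
      _ = u' t ^ 2 := one_mul _
  -- bound 2
  have h2 : Real.sqrt (∫ x, f2 x ^ 2 ∂μ) ≤ (4/a) * Real.sqrt U := by
    have hle : ∫ x, f2 x ^ 2 ∂μ ≤ ∫ x, (4/a)^2 * u x ^ 2 ∂μ := by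
      have hint : Integrable (fun x => (4/a)^2 * u x ^ 2) μ := hmu.integrable_sq.const_mul _
      refine integral_mono_of_nonneg (Filter.Eventually.of_forall fun x => sq_nonneg _)
        hint (ae_restrict_of_forall_mem measurableSet_Ioc fun t ht => ?_)
      have h := hφ'b t ht
      have h2 : φ' t ^ 2 ≤ (2/a)^2 := by
        rw [← sq_abs]; exact pow_le_pow_left₀ (abs_nonneg _) h 2
      simp only [hf2def]
      have h4 := mul_le_mul_of_nonneg_right h2 (sq_nonneg (u t))
      calc (-(2 * φ' t * u t))^2 = 4 * (φ' t ^2 * u t ^2) := by ring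
        _ ≤ 4 * ((2/a)^2 * u t ^2) := by linarith
        _ = (4/a)^2 * u t ^ 2 := by ring
    calc Real.sqrt (∫ x, f2 x ^ 2 ∂μ) ≤ Real.sqrt (∫ x, (4/a)^2 * u x ^ 2 ∂μ) :=
          Real.sqrt_le_sqrt hle
      _ = (4/a) * Real.sqrt U := by
          rw [integral_const_mul, Real.sqrt_mul (sq_nonneg _), Real.sqrt_sq (by positivity)]
  -- bound 3
  have h3 : Real.sqrt (∫ x, f3 x ^ 2 ∂μ) ≤ (Real.sqrt 2 / a) * Real.sqrt U := by
    set c : ℝ := 4/a^4 * U with hcdef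
    have hc0 : 0 ≤ c := by positivity
    set g : ℝ → ℝ := fun t => Set.indicator (Set.Icc 0 a) (fun t => c * t) t with hgdef
    have hseteq : Set.Icc (0:ℝ) a ∩ Set.Ioc 0 b = Set.Ioc 0 a := by
      ext x
      simp only [Set.mem_inter_iff, Set.mem_Icc, Set.mem_Ioc]
      constructor
      · rintro ⟨⟨_, h2⟩, h3, _⟩; exact ⟨h3, h2⟩
      · rintro ⟨h1, h2⟩; exact ⟨⟨h1.le, h2⟩, h1, h2.trans hab⟩
    have hio : (∫ t in Set.Ioc (0:ℝ) a, t) = a^2/2 := by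
      have h' : (∫ t in (0:ℝ)..a, t) = a^2/2 := by
        rw [integral_id]; ring
      rwa [intervalIntegral.integral_of_le ha.le] at h'
    have hgi : Integrable g μ := by
      have hc : Integrable (fun t => c * t) (volume.restrict (Set.Icc (0:ℝ) a)) :=
        (continuous_const.mul continuous_id).integrableOn_Icc
      have h2 : Integrable (fun t => c * t) (μ.restrict (Set.Icc (0:ℝ) a)) := by
        refine hc.mono_measure ?_
        rw [hμdef, Measure.restrict_restrict measurableSet_Icc]
        exact Measure.restrict_mono Set.inter_subset_left le_rfl
      rw [hgdef]
      exact (integrable_indicator_iff measurableSet_Icc).mpr h2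
    have hpt : ∀ t ∈ Set.Ioc (0:ℝ) b, f3 t ^ 2 ≤ g t := by
      intro t ht
      by_cases hta : t ≤ a
      · have hmem : t ∈ Set.Icc (0:ℝ) a := ⟨ht.1.le, hta⟩
        have hψt : ψ t = 2/a^2 := by rw [hψ t, Set.indicator_of_mem hmem]
        -- Cauchy-Schwarz for V t
        set μt : Measure ℝ := volume.restrict (Set.Ioc (0:ℝ) t) with hμtdef
        haveI : IsFiniteMeasure μt := ⟨by
          rw [Measure.restrict_apply_univ]; exact measure_Ioc_lt_top⟩
        have hsub : Set.Ioc (0:ℝ) t ⊆ Set.Icc (0:ℝ) b :=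
          fun x hx => ⟨hx.1.le, hx.2.trans ht.2⟩
        have hmut : MemLp u 2 μt :=
          MemLp.of_bound ((hcu.mono hsub).aestronglyMeasurable measurableSet_Ioc) Cu
            (ae_restrict_of_forall_mem measurableSet_Ioc fun x hx => hCu x (hsub hx))
        have hVeq : V t = ∫ x, u x ∂μt := intervalIntegral.integral_of_le ht.1.le
        have hmeas : (μt Set.univ).toReal = t := by
          rw [Measure.restrict_apply_univ, Real.volume_Ioc, sub_zero,
            ENNReal.toReal_ofReal ht.1.le]
        have hCS := my_abs_integral_le hmut
        rw [hmeas, ← hVeq] at hCS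
        set X : ℝ := ∫ x, u x ^ 2 ∂μt with hXdef
        have hX0 : 0 ≤ X := integral_nonneg fun x => sq_nonneg _
        have hXU : X ≤ U := by
          rw [hXdef, hUdef, hμtdef, hμdef]
          refine setIntegral_mono_set hmu.integrable_sq
            (Filter.Eventually.of_forall fun x => sq_nonneg _) ?_
          exact HasSubset.Subset.eventuallyLE (Set.Ioc_subset_Ioc le_rfl (ht.2))
        have hV2 : V t ^ 2 ≤ U * t := by
          have : V t ^ 2 ≤ (Real.sqrt X * Real.sqrt t)^2 := by
            rw [← sq_abs (V t)]
            exact pow_le_pow_left₀ (abs_nonneg _) hCS 2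
          rw [mul_pow, Real.sq_sqrt hX0, Real.sq_sqrt ht.1.le] at this
          refine this.trans ?_
          exact mul_le_mul_of_nonneg_right hXU ht.1.le
        have hgval : g t = c * t := by rw [hgdef]; exact Set.indicator_of_mem hmem _
        rw [hgval, hcdef]
        have hf3eq : f3 t ^ 2 = (2/a^2)^2 * V t ^2 := by
          simp only [hf3def]; rw [hψt]; ring
        rw [hf3eq]
        have ht0 : 0 ≤ t := ht.1.le
        calc (2/a^2)^2 * V t ^2 ≤ (2/a^2)^2 * (U * t) := by
              refine mul_le_mul_of_nonneg_left hV2 (by positivity)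
          _ = 4/a^4 * U * t := by ring
      · have hψt : ψ t = 0 := by
          rw [hψ t, Set.indicator_of_notMem]
          intro h; exact hta h.2
        have hgt : g t = 0 := by
          rw [hgdef]; exact Set.indicator_of_notMem (fun h => hta h.2) _
        simp [hf3def, hψt, hgt]
    have hle : ∫ x, f3 x ^ 2 ∂μ ≤ ∫ x, g x ∂μ :=
      integral_mono_of_nonneg (Filter.Eventually.of_forall fun x => sq_nonneg _) hgi
        (ae_restrict_of_forall_mem measurableSet_Ioc hpt)
    have hgval : ∫ x, g x ∂μ = c * (a^2/2) := by
      have e1 : ∫ x, g x ∂μ = ∫ x in Set.Icc (0:ℝ) a, c * x ∂μ := by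
        rw [hgdef]
        exact integral_indicator measurableSet_Icc
      rw [e1, hμdef, Measure.restrict_restrict measurableSet_Icc, hseteq,
        integral_const_mul, hio]
    have hfinal : ∫ x, f3 x ^ 2 ∂μ ≤ 2/a^2 * U := by
      rw [hgval, hcdef] at hle
      calc ∫ x, f3 x ^ 2 ∂μ ≤ 4/a^4 * U * (a^2/2) := hle
        _ = 2/a^2 * U := by field_simp; ring
    calc Real.sqrt (∫ x, f3 x ^ 2 ∂μ) ≤ Real.sqrt (2/a^2 * U) := Real.sqrt_le_sqrt hfinal
      _ = (Real.sqrt 2 / a) * Real.sqrt U := by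
          rw [show (2:ℝ)/a^2 = (Real.sqrt 2 / a)^2 by
              rw [div_pow, Real.sq_sqrt (by norm_num : (0:ℝ) ≤ 2)],
            Real.sqrt_mul (sq_nonneg _), Real.sqrt_sq (by positivity)]
  -- combine
  calc Real.sqrt (∫ t, (f1 t + (f2 t + f3 t))^2 ∂μ)
      ≤ Real.sqrt (∫ x, f1 x ^ 2 ∂μ) + Real.sqrt (∫ x, (f2 x + f3 x) ^ 2 ∂μ) := step1
    _ ≤ Real.sqrt (∫ x, f1 x ^ 2 ∂μ)
        + (Real.sqrt (∫ x, f2 x ^ 2 ∂μ) + Real.sqrt (∫ x, f3 x ^ 2 ∂μ)) := by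
          exact add_le_add_right step2 _
    _ ≤ Real.sqrt (∫ t, u' t ^ 2 ∂μ) + ((4/a) * Real.sqrt U + (Real.sqrt 2 / a) * Real.sqrt U) :=
          add_le_add h1 (add_le_add h2 h3)
    _ = Real.sqrt (∫ t, u' t ^ 2 ∂μ) + (4 + Real.sqrt 2) * a⁻¹ * Real.sqrt U := by ring
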